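/- Let F be a field, n ≥ 1, and let p, q ∈ F[X] with deg p ≤ n, deg q ≤ n, and p(X²) = Σ_{j=0}^{n} q.coeff(j)·X^{n−j}·(X²+1)^{j} (p is represented by q). Write a_k = p.coeff(n−k) and c_j = q.coeff(n−j). Then c_j = 0 for all odd j, and for every 0 ≤ k ≤ n one has a_k = a_{n−k} = Σ_{j=0}^{min(k, n−k)} C(n−2j, k−j) · c_{2j}, where C(·,·) denotes the binomial coefficient. -/

import Mathlib

open Polynomial

private lemma rhs_coeff (F : Type*) [Field F] (n : ℕ) (q : Polynomial F) (m : ℕ) :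
    (∑ j ∈ Finset.range (n + 1),
        Polynomial.C (q.coeff j) * X ^ (n - j) * (X ^ 2 + 1) ^ j).coeff m
    = ∑ j ∈ Finset.range (n+1), ∑ i ∈ Finset.range (j+1),
        q.coeff j * ((j.choose i : ℕ) : F) * (if m = (n - j) + 2*i then (1:F) else 0) := by
  rw [Polynomial.finset_sum_coeff]
  refine Finset.sum_congr rfl fun j hj => ?_
  rw [add_pow, Finset.mul_sum, Polynomial.finset_sum_coeff]
  refine Finset.sum_congr rfl fun i hi => ?_
  have h : Polynomial.C (q.coeff j) * X ^ (n - j) *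
        (((X:Polynomial F) ^ 2) ^ i * 1 ^ (j - i) * (j.choose i : Polynomial F))
      = Polynomial.C (q.coeff j * ((j.choose i : ℕ) : F)) * X ^ ((n-j) + 2*i) := by
    rw [map_mul, map_natCast, one_pow, mul_one, ← pow_mul]
    ring
  rw [h, Polynomial.coeff_C_mul, Polynomial.coeff_X_pow]

/-- Proposition 2.9 of the paper: if `p` of degree ≤ n is represented by `q` of degree
≤ n, writing `aₖ = p.coeff (n-k)` and `cⱼ = q.coeff (n-j)`, then `cⱼ = 0` for odd `j`
and `aₖ = a_{n-k} = ∑_{j=0}^{min(k,n-k)} C(n-2j, k-j) c_{2j}` for all `0 ≤ k ≤ n`. -/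
theorem coeffs_of_represented_polynomial (F : Type*) [Field F] (n : ℕ) (hn : 1 ≤ n)
    (p q : Polynomial F) (hp : p.degree ≤ n) (hq : q.degree ≤ n)
    (hrep : p.comp (X ^ 2) =
      ∑ j ∈ Finset.range (n + 1),
        Polynomial.C (q.coeff j) * X ^ (n - j) * (X ^ 2 + 1) ^ j) :
    (∀ j ≤ n, Odd j → q.coeff (n - j) = 0) ∧
    (∀ k ≤ n,
      p.coeff (n - k) = p.coeff k ∧
      p.coeff (n - k) =
        ∑ j ∈ Finset.range (min k (n - k) + 1),
          ((n - 2 * j).choose (k - j) : F) * q.coeff (n - 2 * j)) := by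
  have hS : ∀ m, (p.comp (X^2)).coeff m
      = ∑ j ∈ Finset.range (n+1), ∑ i ∈ Finset.range (j+1),
          q.coeff j * ((j.choose i : ℕ) : F) * (if m = (n - j) + 2*i then (1:F) else 0) := by
    intro m
    rw [hrep, rhs_coeff]
  -- Part 1: odd coefficients vanish
  have hodd : ∀ d, d ≤ n → Odd d → q.coeff (n - d) = 0 := by
    intro d
    induction d using Nat.strong_induction_on with
    | _ d IH =>
      intro hdn hd
      have hd' : d % 2 = 1 := Nat.odd_iff.mp hd
      have hL0 : (p.comp (X^2)).coeff (2*n - d) = 0 := by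
        rw [← Polynomial.expand_eq_comp_X_pow,
          Polynomial.coeff_expand (by norm_num : 0 < 2), if_neg (by omega : ¬ 2 ∣ 2*n - d)]
      rw [hS] at hL0
      have hsum : (∑ j ∈ Finset.range (n+1), ∑ i ∈ Finset.range (j+1),
          q.coeff j * ((j.choose i : ℕ) : F) * (if 2*n - d = (n - j) + 2*i then (1:F) else 0))
          = q.coeff (n - d) := by
        rw [Finset.sum_eq_single_of_mem (n - d) (Finset.mem_range.mpr (by omega))]
        · rw [Finset.sum_eq_single_of_mem (n - d) (Finset.mem_range.mpr (by omega))]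
          · rw [if_pos (by omega), Nat.choose_self]
            simp
          · intro i hi hne
            rw [if_neg (by simp at hi; omega), mul_zero]
        · intro j hj hne
          simp only [Finset.mem_range] at hj
          refine Finset.sum_eq_zero fun i hi => ?_
          simp only [Finset.mem_range] at hi
          by_cases hc : 2*n - d = (n - j) + 2*i
          · have hq0 : q.coeff j = 0 := by
              have := IH (n - j) (by omega) (by omega) (Nat.odd_iff.mpr (by omega))
              rwa [Nat.sub_sub_self (by omega : j ≤ n)] at this
            rw [hq0, zero_mul, zero_mul]
          · rw [if_neg hc, mul_zero]
      rw [hsum] at hL0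
      exact hL0
  -- Part 2: the main coefficient formula
  have hmain : ∀ k ≤ n, p.coeff (n - k)
      = ∑ t ∈ Finset.range (min k (n-k) + 1),
          ((n - 2 * t).choose (k - t) : F) * q.coeff (n - 2 * t) := by
    intro k hk
    have hL : (p.comp (X^2)).coeff (2*(n-k)) = p.coeff (n-k) := by
      rw [← Polynomial.expand_eq_comp_X_pow,
        Polynomial.coeff_expand_mul' (by norm_num : 0 < 2)]
    rw [← hL, hS]
    have hsub : (Finset.range (min k (n-k) + 1)).image (fun t => n - 2*t)
        ⊆ Finset.range (n+1) := by
      intro j hj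
      simp only [Finset.mem_image, Finset.mem_range] at hj ⊢
      omega
    rw [← Finset.sum_subset hsub]
    · rw [Finset.sum_image (by intro t1 ht1 t2 ht2 h; simp only [Finset.mem_coe, Finset.mem_range] at ht1 ht2 h; omega)]
      refine Finset.sum_congr rfl fun t ht => ?_
      simp only [Finset.mem_range] at ht
      rw [Finset.sum_eq_single_of_mem (n - k - t) (Finset.mem_range.mpr (by omega))]
      · rw [if_pos (by omega), mul_one,
          show (n - 2*t).choose (n - k - t) = (n - 2*t).choose (k - t) by
            rw [show n - k - t = n - 2*t - (k - t) by omega]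
            exact Nat.choose_symm (by omega),
          mul_comm]
      · intro i hi hne
        simp only [Finset.mem_range] at hi
        rw [if_neg (by omega), mul_zero]
    · intro j hj hj'
      simp only [Finset.mem_range] at hj
      refine Finset.sum_eq_zero fun i hi => ?_
      simp only [Finset.mem_range] at hi
      by_cases hc : 2*(n-k) = (n - j) + 2*i
      · exfalso
        apply hj'
        simp only [Finset.mem_image, Finset.mem_range]
        exact ⟨(n - j)/2, by omega, by omega⟩
      · rw [if_neg hc, mul_zero]
  refine ⟨fun j hj hoj => hodd j hj hoj, fun k hk => ?_⟩
  have h1 := hmain k hk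
  have h2 := hmain (n - k) (by omega)
  rw [show n - (n - k) = k by omega] at h2
  rw [min_comm (n-k) k] at h2
  refine ⟨?_, h1⟩
  rw [h1, h2]
  refine Finset.sum_congr rfl fun t ht => ?_
  simp only [Finset.mem_range] at ht
  rw [show (n - 2*t).choose (k - t) = (n - 2*t).choose (n - k - t) by
    rw [show n - k - t = n - 2*t - (k - t) by omega]
    exact (Nat.choose_symm (by omega)).symm]
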